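/- Let G be a 2-node-connected MAP instance with no {0,1}-edge-pairs, let {v,w} be a bad-pair of G, and let C be a bp-component of {v,w}. Then both C^{v,w} and C^⊘ are 2-node-connected. -/

import Mathlib

set_option autoImplicit false

/-!  A formal framework for the Matching Augmentation Problem (MAP):
loopless multigraphs with edge costs in `{0,1}` (given by the predicate
`isZero` marking the zero-edges). -/

/-- A finite loopless multigraph together with `{0,1}` edge costs:
`isZero e` means that the edge `e` has cost zero (otherwise it is a unit-edge). -/
structure CostGraph where
  V : Type
  E : Type
  finV : Finite V
  finE : Finite E
  ends : E → Sym2 V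
  loopless : ∀ e, ¬ (ends e).IsDiag
  isZero : E → Prop

namespace CostGraph

variable (G : CostGraph)

/-- `x` and `y` are joined by an edge of `F` and both lie in the node set `S`. -/
def Adj (S : Set G.V) (F : Set G.E) (x y : G.V) : Prop :=
  x ∈ S ∧ y ∈ S ∧ ∃ e ∈ F, G.ends e = s(x, y)

/-- Reachability in the sub-multigraph with node set `S` and edge set `F`. -/
def Reachable (S : Set G.V) (F : Set G.E) (x y : G.V) : Prop :=
  Relation.ReflTransGen (G.Adj S F) x y

/-- The sub-multigraph with node set `S` and those edges of `F` having both
end nodes in `S` is connected (in particular `S` is nonempty). -/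
def ConnectedOn (S : Set G.V) (F : Set G.E) : Prop :=
  S.Nonempty ∧ ∀ x ∈ S, ∀ y ∈ S, G.Reachable S F x y

/-- The sub-multigraph with node set `S` and edge set `F` is 2-edge-connected:
it has at least two nodes and removing any one edge leaves it connected. -/
def TwoECOn (S : Set G.V) (F : Set G.E) : Prop :=
  1 < S.ncard ∧ G.ConnectedOn S F ∧ ∀ e : G.E, G.ConnectedOn S (F \ {e})

/-- `F` is the edge set of a 2-edge-connected spanning subgraph (2-ECSS) of `G`. -/
def TwoEC (F : Set G.E) : Prop := G.TwoECOn Set.univ F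

/-- The cost of a set of edges: the number of unit-edges in it. -/
noncomputable def cost (F : Set G.E) : ℕ := {e ∈ F | ¬ G.isZero e}.ncard

/-- `opt G` is the minimum cost of a 2-ECSS of `G`. -/
noncomputable def opt : ℕ := sInf (G.cost '' {F | G.TwoEC F})

/-- `F` is a 2-edge cover: every node is incident to at least two edges of `F`. -/
def TwoEdgeCover (F : Set G.E) : Prop :=
  ∀ v : G.V, 2 ≤ {e ∈ F | v ∈ G.ends e}.ncard

/-- `tau G` is the minimum cost of a 2-edge cover of `G`. -/
noncomputable def tau : ℕ := sInf (G.cost '' {F | G.TwoEdgeCover F})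

/-- The zero-edges form a matching: no two distinct zero-edges share an end node. -/
def ZeroMatching : Prop :=
  ∀ e f : G.E, G.isZero e → G.isZero f → e ≠ f → ∀ x : G.V, x ∈ G.ends e → x ∉ G.ends f

/-- A MAP instance: a (finite, loopless) multigraph with `{0,1}` edge costs whose
zero-edges form a matching and which is 2-edge-connected. -/
def IsMAP : Prop := G.ZeroMatching ∧ G.TwoEC Set.univ

/-- The degree of a node: the number of edges incident to it. -/
noncomputable def degree (v : G.V) : ℕ := {e : G.E | v ∈ G.ends e}.ncard

/-- `e, f` form a `{0,1}`-edge-pair: parallel edges, `e` of cost zero, `f` of cost one. -/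
def IsZeroOnePair (e f : G.E) : Prop :=
  e ≠ f ∧ G.ends e = G.ends f ∧ G.isZero e ∧ ¬ G.isZero f

/-- `G` has no `{0,1}`-edge-pairs. -/
def NoZeroOnePair : Prop := ∀ e f, ¬ G.IsZeroOnePair e f

/-- `v` is a cut node: deleting `v` leaves a disconnected (or empty) graph. -/
def IsCutNode (v : G.V) : Prop := ¬ G.ConnectedOn ({v}ᶜ) Set.univ

/-- `{v, w}` is a bad-pair: `vw` is a zero-edge and deleting both `v` and `w`
disconnects the graph. -/
def IsBadPair (v w : G.V) : Prop :=
  (∃ e, G.isZero e ∧ G.ends e = s(v, w)) ∧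
    ¬ G.ConnectedOn (({v, w} : Set G.V)ᶜ) Set.univ

/-- The number of bad-pairs of `G` (counted as unordered pairs). -/
noncomputable def badPairCount : ℕ :=
  {z : Sym2 G.V | ∃ a b, z = s(a, b) ∧ G.IsBadPair a b}.ncard

/-- `C` is (the node set of) a connected component of the sub-multigraph with node
set `S` and edge set `F`. -/
def IsCompOf (S : Set G.V) (F : Set G.E) (C : Set G.V) : Prop :=
  C ⊆ S ∧ C.Nonempty ∧ G.ConnectedOn C F ∧
    ∀ x ∈ C, ∀ y ∈ S, G.Adj S F x y → y ∈ C

/-- `Q` is the node set of a redundant 4-cycle: a 4-cycle `u₁u₂u₃u₄` with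
`V(C) ≠ V(G)`, two non-adjacent edges of cost zero and two non-adjacent nodes
of degree two in `G`. -/
def IsRed4CycleOn (Q : Set G.V) : Prop :=
  ∃ (u₁ u₂ u₃ u₄ : G.V) (e₁ e₂ e₃ e₄ : G.E),
    Q = {u₁, u₂, u₃, u₄} ∧
    u₁ ≠ u₂ ∧ u₁ ≠ u₃ ∧ u₁ ≠ u₄ ∧ u₂ ≠ u₃ ∧ u₂ ≠ u₄ ∧ u₃ ≠ u₄ ∧
    e₁ ≠ e₂ ∧ e₁ ≠ e₃ ∧ e₁ ≠ e₄ ∧ e₂ ≠ e₃ ∧ e₂ ≠ e₄ ∧ e₃ ≠ e₄ ∧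
    G.ends e₁ = s(u₁, u₂) ∧ G.ends e₂ = s(u₂, u₃) ∧
    G.ends e₃ = s(u₃, u₄) ∧ G.ends e₄ = s(u₄, u₁) ∧
    G.isZero e₁ ∧ G.isZero e₃ ∧
    G.degree u₂ = 2 ∧ G.degree u₄ = 2 ∧
    Q ≠ Set.univ

/-- A well-structured MAP instance: no `{0,1}`-edge-pairs, no redundant 4-cycles,
no cut nodes and no bad-pairs. -/
def WellStructured : Prop :=
  G.IsMAP ∧ G.NoZeroOnePair ∧ (∀ Q, ¬ G.IsRed4CycleOn Q) ∧
    (∀ v, ¬ G.IsCutNode v) ∧ (∀ v w, ¬ G.IsBadPair v w)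

/-- `G` is 2-node-connected: more than two nodes and deleting any one node
leaves a connected graph. -/
def TwoNC : Prop :=
  2 < Nat.card G.V ∧ ∀ v : G.V, G.ConnectedOn ({v}ᶜ) Set.univ

/-- Bridge of the sub-multigraph with node set `S` and edge set `F`: an edge of `F`
inside `S` whose removal disconnects its end nodes. -/
def IsBridgeOn (S : Set G.V) (F : Set G.E) (e : G.E) : Prop :=
  e ∈ F ∧ (∀ x ∈ G.ends e, x ∈ S) ∧
    ∀ x y, G.ends e = s(x, y) → ¬ G.Reachable S (F \ {e}) x y

/-- Bridge of the spanning subgraph `(V, F)`. -/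
def IsBridge (F : Set G.E) (e : G.E) : Prop := G.IsBridgeOn Set.univ F e

/-- `B` is (the node set of) a 2ec-block of the spanning subgraph `(V, F)`:
a maximal connected bridgeless subgraph with at least two nodes, equivalently a
connected component with at least two nodes of the graph obtained by deleting
all bridges. -/
def IsTwoECBlock (F : Set G.E) (B : Set G.V) : Prop :=
  G.IsCompOf Set.univ (F \ {e | G.IsBridge F e}) B ∧ 2 ≤ B.ncard

/-- Delete a set `D` of edges. -/
noncomputable def deleteEdges (D : Set G.E) : CostGraph where
  V := G.V
  E := {e : G.E // e ∉ D}
  finV := G.finV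
  finE := by haveI := G.finE; exact Subtype.finite
  ends e := G.ends e.1
  loopless e := G.loopless e.1
  isZero e := G.isZero e.1

/-- The sub-instance induced on a set `S` of nodes. -/
noncomputable def induce (S : Set G.V) : CostGraph where
  V := ↥S
  E := {e : G.E // ∀ x ∈ G.ends e, x ∈ S}
  finV := by haveI := G.finV; exact Subtype.finite
  finE := by haveI := G.finE; exact Subtype.finite
  ends e := (G.ends e.1).pmap Subtype.mk e.2
  loopless e := by
    intro hd
    exact G.loopless e.1
      (by simpa [Sym2.pmap_subtype_map_subtypeVal] using hd.map (f := Subtype.val))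
  isZero e := G.isZero e.1

/-- Contraction of `G` along (the equivalence generated by) a relation `R`:
node classes are identified, and edges joining identified nodes are removed
(no loops are created). -/
noncomputable def contract (R : G.V → G.V → Prop) : CostGraph where
  V := Quotient (Relation.EqvGen.setoid R)
  E := {e : G.E // ¬ (Sym2.map (Quotient.mk (Relation.EqvGen.setoid R)) (G.ends e)).IsDiag}
  finV := by haveI := G.finV; exact Quotient.finite _
  finE := by haveI := G.finE; exact Subtype.finite
  ends e := Sym2.map (Quotient.mk (Relation.EqvGen.setoid R)) (G.ends e.1)
  loopless e := e.2
  isZero e := G.isZero e.1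

/-- The relation identifying the nodes of each redundant 4-cycle. -/
def red4Rel (x y : G.V) : Prop := ∃ Q, G.IsRed4CycleOn Q ∧ x ∈ Q ∧ y ∈ Q

/-- The multigraph obtained from `G` by contracting all redundant 4-cycles. -/
noncomputable def contractRed4 : CostGraph := G.contract G.red4Rel

/-- For a bad-pair `{v,w}` and a bp-component `C`: the sub-instance `C^{v,w}`
induced on `V(C) ∪ {v, w}`. -/
noncomputable def bpUp (v w : G.V) (C : Set G.V) : CostGraph :=
  G.induce (C ∪ {v, w})

/-- For a bad-pair `{v,w}` and a bp-component `C`: the instance `C^⊘`, obtained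
from `C^{v,w}` by contracting the zero-edge `vw` if `C` has at least two nodes,
and equal to `C^{v,w}` if `C` has exactly one node. -/
noncomputable def bpContr (v w : G.V) (C : Set G.V) : CostGraph :=
  if 2 ≤ C.ncard then
    (G.bpUp v w C).contract (fun x y => x.1 = v ∧ y.1 = w)
  else G.bpUp v w C

/-- Every edge of `C^⊘` is an edge of `G`. -/
noncomputable def bpContrEdge (v w : G.V) (C : Set G.V) :
    (G.bpContr v w C).E → G.E := by
  unfold bpContr
  by_cases h : 2 ≤ C.ncard
  · rw [if_pos h]; exact fun e => e.1.1
  · rw [if_neg h]; exact fun e => e.1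

/-- The sub-multigraph `(S, F)` is 2-node-connected. -/
def TwoNCOn (S : Set G.V) (F : Set G.E) : Prop :=
  2 < S.ncard ∧ ∀ v : G.V, G.ConnectedOn (S \ {v}) F

/-- The sub-multigraph `(S, F)` consists of two nodes joined by two parallel edges. -/
def IsParallelPairBlock (S : Set G.V) (F : Set G.E) : Prop :=
  S.ncard = 2 ∧ ∃ e f, e ≠ f ∧ G.ends e = G.ends f ∧ F = {e, f}

/-- `(B i, F i)` (for `i : Fin k`) are the blocks of `G`: each block is 2-node-connected
or a pair of nodes joined by two parallel edges, the edge set of `G` is partitioned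
among the blocks, each `B i` is the set of end nodes of the edges of `F i`, and any
two blocks share at most one node. -/
def IsBlockDecomp {k : ℕ} (B : Fin k → Set G.V) (F : Fin k → Set G.E) : Prop :=
  (∀ i, ∀ e ∈ F i, ∀ x ∈ G.ends e, x ∈ B i) ∧
  (∀ i, B i = {x | ∃ e ∈ F i, x ∈ G.ends e}) ∧
  (Set.univ : Set G.E) = ⋃ i, F i ∧
  (∀ i j, i ≠ j → Disjoint (F i) (F j)) ∧
  (∀ i j, i ≠ j → (B i ∩ B j).ncard ≤ 1) ∧
  (∀ i, G.TwoNCOn (B i) (F i) ∨ G.IsParallelPairBlock (B i) (F i))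

end CostGraph

/-- `TauHatRel G t` holds when `t` is a value of `τ̂` for `G`, i.e. a value obtainable
by the following recursion: if `G` has no redundant 4-cycles and no cut nodes
(so it is well-structured provided it has no `{0,1}`-edge-pairs and no bad-pairs)
then `τ̂(G) = τ(G)`; otherwise contract all (`q`, say) redundant 4-cycles of `G`,
split the resulting graph at its cut nodes into its blocks `G₁, …, G_k`, and set
`τ̂(G) = 2q + τ̂(G₁) + … + τ̂(G_k)`. -/
inductive TauHatRel : CostGraph → ℕ → Prop where
  | base (G : CostGraph)
      (h4 : ∀ Q, ¬ G.IsRed4CycleOn Q) (hc : ∀ v, ¬ G.IsCutNode v) :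
      TauHatRel G G.tau
  | step (G : CostGraph) (k : ℕ)
      (B : Fin k → Set G.contractRed4.V) (F : Fin k → Set G.contractRed4.E)
      (t : Fin k → ℕ)
      (hobstr : (∃ Q, G.IsRed4CycleOn Q) ∨ (∃ v, G.IsCutNode v))
      (hdec : G.contractRed4.IsBlockDecomp B F)
      (ht : ∀ i, TauHatRel (G.contractRed4.induce (B i)) (t i)) :
      TauHatRel G (2 * {Q | G.IsRed4CycleOn Q}.ncard + ∑ i, t i)

namespace CostGraph

/-- `τ̂(G)`: the value associated to `G` by the recursion of `TauHatRel`. -/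
noncomputable def tauHat (G : CostGraph) : ℕ := sInf {t | TauHatRel G t}

open Classical in
/-- The lower bound `lb(G)`: `τ̂(G)` if `G` has no `{0,1}`-edge-pairs, no cut nodes
and no bad-pairs, and `opt(G)` otherwise. -/
noncomputable def lb (G : CostGraph) : ℕ :=
  if G.NoZeroOnePair ∧ (∀ v, ¬ G.IsCutNode v) ∧ (∀ v w, ¬ G.IsBadPair v w)
  then G.tauHat else G.opt

end CostGraph


namespace CostGraph

variable {G : CostGraph}

lemma adj_symm' {S : Set G.V} {F : Set G.E} {x y : G.V} (h : G.Adj S F x y) :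
    G.Adj S F y x := by
  obtain ⟨h1, h2, e, he, hh⟩ := h
  exact ⟨h2, h1, e, he, by rw [hh, Sym2.eq_swap]⟩

lemma reach_symm' {S : Set G.V} {F : Set G.E} {x y : G.V} (h : G.Reachable S F x y) :
    G.Reachable S F y x :=
  by
    haveI : Std.Symm (G.Adj S F) := ⟨fun _ _ => adj_symm'⟩
    exact Std.Symm.symm (r := Relation.ReflTransGen (G.Adj S F)) _ _ h

lemma reach_mono' {S S' : Set G.V} {F F' : Set G.E} (hS : S ⊆ S') (hF : F ⊆ F')
    {x y : G.V} (h : G.Reachable S F x y) : G.Reachable S' F' x y :=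
  Relation.ReflTransGen.mono (r := G.Adj S F) (p := G.Adj S' F')
    (fun _ _ h => by
      obtain ⟨h1, h2, e, he, hh⟩ := h
      exact ⟨hS h1, hS h2, e, hF he, hh⟩) _ _ h

lemma reach_up' {S A : Set G.V} (hAS : A ⊆ S) {x y : G.V} (hx : x ∈ A)
    (h : G.Reachable A {e | ∀ z ∈ G.ends e, z ∈ S} x y) :
    ∀ (hy : y ∈ A),
      (G.induce S).Reachable {a : ↥S | a.1 ∈ A} Set.univ ⟨x, hAS hx⟩ ⟨y, hAS hy⟩ := by
  induction h with
  | refl => intro _; exact .refl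
  | tail _ hadj ih =>
    intro hy
    obtain ⟨hb, hy2, e, he, hh⟩ := hadj
    refine (ih hb).tail ⟨hb, hy, ⟨e, he⟩, trivial, ?_⟩
    apply Sym2.map.injective Subtype.val_injective
    show Sym2.map Subtype.val (Sym2.pmap Subtype.mk (G.ends e) he) = _
    rw [Sym2.pmap_subtype_map_subtypeVal, hh]
    rfl

lemma contract_reach' {R : G.V → G.V → Prop} {A : Set G.V}
    {B : Set (G.contract R).V}
    (hAB : ∀ a ∈ A, (Quotient.mk (Relation.EqvGen.setoid R) a) ∈ B)
    {x y : G.V} (h : G.Reachable A Set.univ x y) :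
    (G.contract R).Reachable B Set.univ
      (Quotient.mk (Relation.EqvGen.setoid R) x)
      (Quotient.mk (Relation.EqvGen.setoid R) y) := by
  induction h with
  | refl => exact .refl
  | tail _ hadj ih =>
    rename_i b c _
    obtain ⟨hb, hc, e, -, hh⟩ := hadj
    by_cases hd : (Quotient.mk (Relation.EqvGen.setoid R) b) =
        Quotient.mk (Relation.EqvGen.setoid R) c
    · exact hd ▸ ih
    · refine ih.tail ⟨hAB b hb, hAB c hc, ⟨e, ?_⟩, trivial, ?_⟩
      · rw [hh, Sym2.map_pair_eq, Sym2.mk_isDiag_iff]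
        exact hd
      · show Sym2.map _ (G.ends e) = _
        rw [hh]
        exact Sym2.map_pair_eq _ _ _

end CostGraph

/-- Let `G` be a 2-node-connected MAP instance with no
`{0,1}`-edge-pairs, `{v,w}` a bad-pair of `G`, and `C` a bp-component of `{v,w}`.
Then both `C^{v,w}` and `C^⊘` are 2-node-connected. -/
theorem bpUp_bpContr_twoNC (G : CostGraph) (hG : G.IsMAP) (h2nc : G.TwoNC)
    (h01 : G.NoZeroOnePair) (v w : G.V) (hbp : G.IsBadPair v w)
    (C : Set G.V) (hC : G.IsCompOf (({v, w} : Set G.V)ᶜ) Set.univ C) :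
    (G.bpUp v w C).TwoNC ∧ (G.bpContr v w C).TwoNC := by
  classical
  haveI : Finite G.V := G.finV
  obtain ⟨hCsub, hCne, hCconn, hCmax⟩ := hC
  obtain ⟨⟨e₀, he₀z, he₀⟩, -⟩ := hbp
  have hvw : v ≠ w := by
    intro h
    exact G.loopless e₀ (by rw [he₀, h]; exact Sym2.mk_isDiag_iff.mpr rfl)
  set S : Set G.V := C ∪ {v, w} with hSdef
  have hvS : v ∈ S := Or.inr (Or.inl rfl)
  have hwS : w ∈ S := Or.inr (Or.inr rfl)
  have hCS : C ⊆ S := Set.subset_union_left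
  have hdisj : ∀ x ∈ C, x ∉ ({v, w} : Set G.V) := fun x hx => hCsub hx
  have hnbr : ∀ x ∈ C, ∀ y, ∀ e : G.E, G.ends e = s(x, y) → y ∈ S := by
    intro x hx y e hh
    by_cases hy : y ∈ ({v, w} : Set G.V)
    · exact Or.inr hy
    · exact Or.inl (hCmax x hx y hy ⟨hCsub hx, hy, e, trivial, hh⟩)
  have he₀F : e₀ ∈ {e : G.E | ∀ z ∈ G.ends e, z ∈ S} := by
    intro z hz
    rw [he₀] at hz
    rcases Sym2.mem_iff.mp hz with rfl | rfl
    exacts [hvS, hwS]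
  -- every node of C - u can reach {v,w} - u inside (S - u)
  have key : ∀ u : G.V, ∀ x ∈ C, x ≠ u →
      ∃ a, a ∈ ({v, w} : Set G.V) ∧ a ≠ u ∧
        G.Reachable (S \ {u}) {e | ∀ z ∈ G.ends e, z ∈ S} x a := by
    intro u x hx hxu
    obtain ⟨a₀, ha₀vw, ha₀u⟩ : ∃ a₀, a₀ ∈ ({v, w} : Set G.V) ∧ a₀ ≠ u := by
      rcases eq_or_ne v u with rfl | hvu
      · exact ⟨w, Or.inr rfl, fun h => hvw h.symm⟩
      · exact ⟨v, Or.inl rfl, hvu⟩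
    have hreach : G.Reachable ({u}ᶜ) Set.univ x a₀ := (h2nc.2 u).2 x hxu a₀ ha₀u
    have main : ∀ b, G.Reachable ({u}ᶜ) Set.univ b a₀ → b ∈ C →
        ∃ a, a ∈ ({v, w} : Set G.V) ∧ a ≠ u ∧
          G.Reachable (S \ {u}) {e | ∀ z ∈ G.ends e, z ∈ S} b a := by
      intro b hb
      induction hb using Relation.ReflTransGen.head_induction_on with
      | refl => exact fun hbC => absurd ha₀vw (hCsub hbC)
      | head hadj _ ih =>
        rename_i p q _
        intro hpC
        obtain ⟨hp1, hq1, e, -, hh⟩ := hadj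
        have hqS : q ∈ S := hnbr p hpC q e hh
        have heF : e ∈ {e : G.E | ∀ z ∈ G.ends e, z ∈ S} := by
          intro z hz
          rw [hh] at hz
          rcases Sym2.mem_iff.mp hz with rfl | rfl
          exacts [hCS hpC, hqS]
        rcases hqS with hqC | hqvw
        · obtain ⟨a, hav, hau, hr⟩ := ih hqC
          exact ⟨a, hav, hau, hr.head ⟨⟨hCS hpC, hp1⟩, ⟨hCS hqC, hq1⟩, e, heF, hh⟩⟩
        · exact ⟨q, hqvw, hq1,
            Relation.ReflTransGen.single
              ⟨⟨hCS hpC, hp1⟩, ⟨Or.inr hqvw, hq1⟩, e, heF, hh⟩⟩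
    exact main x hreach hx
  -- downstairs connectivity of S - u for every u
  have conn : ∀ u : G.V, (S \ {u}).Nonempty ∧ ∀ x ∈ S \ {u}, ∀ y ∈ S \ {u},
      G.Reachable (S \ {u}) {e | ∀ z ∈ G.ends e, z ∈ S} x y := by
    intro u
    have hto : ∀ x ∈ S \ {u},
        ∃ a, a ∈ ({v, w} : Set G.V) ∧ a ≠ u ∧
          G.Reachable (S \ {u}) {e | ∀ z ∈ G.ends e, z ∈ S} x a := by
      rintro x ⟨hxS, hxu⟩
      rcases hxS with hxC | hxvw
      · exact key u x hxC hxu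
      · exact ⟨x, hxvw, hxu, Relation.ReflTransGen.refl⟩
    have hvwreach : ∀ a b : G.V, a ∈ ({v, w} : Set G.V) → b ∈ ({v, w} : Set G.V) →
        a ≠ u → b ≠ u → G.Reachable (S \ {u}) {e | ∀ z ∈ G.ends e, z ∈ S} a b := by
      intro a b ha hb hau hbu
      rcases eq_or_ne a b with rfl | hab
      · exact Relation.ReflTransGen.refl
      · have hends : G.ends e₀ = s(a, b) := by
          rcases ha with ha | ha <;> rcases hb with hb | hb <;>
            simp -failIfUnchanged only [Set.mem_singleton_iff] at * <;> subst ha <;> subst hb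
          · exact absurd rfl hab
          · exact he₀
          · rw [he₀, Sym2.eq_swap]
          · exact absurd rfl hab
        exact Relation.ReflTransGen.single
          ⟨⟨Or.inr ha, hau⟩, ⟨Or.inr hb, hbu⟩, e₀, he₀F, hends⟩
    constructor
    · obtain ⟨a₀, ha₀vw, ha₀u⟩ : ∃ a₀, a₀ ∈ ({v, w} : Set G.V) ∧ a₀ ≠ u := by
        rcases eq_or_ne v u with rfl | hvu
        · exact ⟨w, Or.inr rfl, fun h => hvw h.symm⟩
        · exact ⟨v, Or.inl rfl, hvu⟩
      exact ⟨a₀, Or.inr ha₀vw, ha₀u⟩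
    · intro x hx y hy
      obtain ⟨a, ha1, ha2, hxa⟩ := hto x hx
      obtain ⟨b, hb1, hb2, hyb⟩ := hto y hy
      exact hxa.trans ((hvwreach a b ha1 hb1 ha2 hb2).trans (CostGraph.reach_symm' hyb))
  have hcard : 2 < S.ncard := by
    have h1 : S.ncard = C.ncard + ({v, w} : Set G.V).ncard := by
      rw [hSdef]
      exact Set.ncard_union_eq (Set.disjoint_left.mpr fun {a} ha => hdisj a ha)
        (Set.toFinite _) (Set.toFinite _)
    have h2 : ({v, w} : Set G.V).ncard = 2 := Set.ncard_pair hvw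
    have h3 : 0 < C.ncard := (Set.ncard_pos (Set.toFinite _)).mpr hCne
    omega
  -- part 1 : bpUp is 2NC
  have hUp : (G.bpUp v w C).TwoNC := by
    unfold CostGraph.bpUp
    constructor
    · show 2 < Nat.card ↥S
      exact hcard
    · intro ν
      obtain ⟨u, huS⟩ := ν
      obtain ⟨hne, hcn⟩ := conn u
      constructor
      · obtain ⟨x, hx⟩ := hne
        exact ⟨⟨x, hx.1⟩, fun h => hx.2 (congrArg Subtype.val h)⟩
      · rintro ⟨x, hxS⟩ hx ⟨y, hyS⟩ hy
        have hx' : x ∈ S \ {u} := ⟨hxS, fun h => hx (Subtype.ext h)⟩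
        have hy' : y ∈ S \ {u} := ⟨hyS, fun h => hy (Subtype.ext h)⟩
        have hr := CostGraph.reach_up' (G := G) Set.diff_subset hx' (hcn x hx' y hy') hy'
        refine CostGraph.reach_mono' ?_ (le_refl _) hr
        intro a ha h
        exact ha.2 (by rw [Set.mem_singleton_iff.mp h]; exact rfl)
  refine ⟨hUp, ?_⟩
  -- part 2 : bpContr is 2NC
  unfold CostGraph.bpContr
  by_cases hC2 : 2 ≤ C.ncard
  · rw [if_pos hC2]
    set R : (G.bpUp v w C).V → (G.bpUp v w C).V → Prop :=
      fun x y => x.1 = v ∧ y.1 = w with hRdef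
    set mk : (G.bpUp v w C).V → ((G.bpUp v w C).contract R).V :=
      Quotient.mk (Relation.EqvGen.setoid R) with hmkdef
    have hchar : ∀ a b : (G.bpUp v w C).V, Relation.EqvGen R a b →
        a = b ∨ (a.1 ∈ ({v, w} : Set G.V) ∧ b.1 ∈ ({v, w} : Set G.V)) := by
      intro a b h
      induction h with
      | rel x y h => exact Or.inr ⟨Or.inl h.1, Or.inr h.2⟩
      | refl x => exact Or.inl rfl
      | symm x y h ih =>
        rcases ih with rfl | ⟨h1, h2⟩
        exacts [Or.inl rfl, Or.inr ⟨h2, h1⟩]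
      | trans x y z h1 h2 ih1 ih2 =>
        rcases ih1 with rfl | ⟨ha, hb⟩
        · exact ih2
        · rcases ih2 with rfl | ⟨hc, hd⟩
          exacts [Or.inr ⟨ha, hb⟩, Or.inr ⟨ha, hd⟩]
    have hexact : ∀ a b : (G.bpUp v w C).V, mk a = mk b →
        a = b ∨ (a.1 ∈ ({v, w} : Set G.V) ∧ b.1 ∈ ({v, w} : Set G.V)) :=
      fun a b h => hchar a b (Quotient.exact h)
    have hmerge : ∀ a b : (G.bpUp v w C).V, a.1 ∈ ({v, w} : Set G.V) →
        b.1 ∈ ({v, w} : Set G.V) → mk a = mk b := by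
      intro a b ha hb
      rcases eq_or_ne a.1 b.1 with h | h
      · exact congrArg _ (Subtype.ext h)
      · apply Quotient.sound
        rcases ha with ha | ha <;> rcases hb with hb | hb <;>
          simp -failIfUnchanged only [Set.mem_singleton_iff] at ha hb
        · exact absurd (ha.trans hb.symm) h
        · exact Relation.EqvGen.rel _ _ ⟨ha, hb⟩
        · exact Relation.EqvGen.symm _ _ (Relation.EqvGen.rel _ _ ⟨hb, ha⟩)
        · exact absurd (ha.trans hb.symm) h
    obtain ⟨c₁, hc₁, c₂, hc₂, hc₁₂⟩ := (Set.one_lt_ncard (Set.toFinite C)).mp hC2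
    have hmkC : ∀ (a : (G.bpUp v w C).V), a.1 ∈ C →
        ∀ (b : (G.bpUp v w C).V), b.1 ∈ ({v, w} : Set G.V) → mk a ≠ mk b := by
      intro a ha b hb h
      rcases hexact a b h with rfl | ⟨h1, _⟩
      · exact hdisj _ ha hb
      · exact hdisj _ ha h1
    constructor
    · -- cardinality
      haveI : Finite ((G.bpUp v w C).contract R).V := ((G.bpUp v w C).contract R).finV
      haveI := Fintype.ofFinite ((G.bpUp v w C).contract R).V
      have h12 : mk ⟨c₁, hCS hc₁⟩ ≠ mk ⟨c₂, hCS hc₂⟩ := by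
        intro h
        rcases hexact _ _ h with h | ⟨h1, _⟩
        · exact hc₁₂ (congrArg Subtype.val h)
        · exact hdisj _ hc₁ h1
      have h13 : mk ⟨c₁, hCS hc₁⟩ ≠ mk ⟨v, hvS⟩ :=
        hmkC ⟨c₁, hCS hc₁⟩ hc₁ ⟨v, hvS⟩ (Or.inl rfl)
      have h23 : mk ⟨c₂, hCS hc₂⟩ ≠ mk ⟨v, hvS⟩ :=
        hmkC ⟨c₂, hCS hc₂⟩ hc₂ ⟨v, hvS⟩ (Or.inl rfl)
      rw [Nat.card_eq_fintype_card]
      exact Fintype.two_lt_card_iff.mpr ⟨_, _, _, h12, h13, h23⟩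
    · intro ν
      obtain ⟨z, rfl⟩ := Quotient.exists_rep ν
      by_cases hz : z.1 ∈ ({v, w} : Set G.V)
      · -- deleted the merged node: the rest is C, connected
        have hCF : ∀ p q, G.Adj C Set.univ p q →
            G.Adj C {e | ∀ t ∈ G.ends e, t ∈ S} p q := by
          rintro p q ⟨h1, h2, e, -, hh⟩
          refine ⟨h1, h2, e, ?_, hh⟩
          intro t ht
          rw [hh] at ht
          rcases Sym2.mem_iff.mp ht with rfl | rfl
          exacts [hCS h1, hCS h2]
        have hAB : ∀ a : (G.bpUp v w C).V, a.1 ∈ C →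
            mk a ∈ ({mk z}ᶜ : Set ((G.bpUp v w C).contract R).V) := by
          intro a ha h
          exact hmkC a ha z hz (Set.mem_singleton_iff.mp h)
        constructor
        · exact ⟨mk ⟨c₁, hCS hc₁⟩, hAB _ hc₁⟩
        · intro α hα β hβ
          obtain ⟨x, rfl⟩ := Quotient.exists_rep α
          obtain ⟨y, rfl⟩ := Quotient.exists_rep β
          have hxC : x.1 ∈ C := by
            rcases x.2 with h | h
            · exact h
            · exact absurd (hmerge x z h hz) hα
          have hyC : y.1 ∈ C := by
            rcases y.2 with h | h
            · exact h
            · exact absurd (hmerge y z h hz) hβ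
          have hdown : G.Reachable C {e | ∀ t ∈ G.ends e, t ∈ S} x.1 y.1 :=
            Relation.ReflTransGen.mono hCF _ _ (hCconn.2 x.1 hxC y.1 hyC)
          have hup := CostGraph.reach_up' (G := G) hCS hxC hdown hyC
          have hlift := CostGraph.contract_reach' (R := R)
            (A := {a : (G.bpUp v w C).V | a.1 ∈ C})
            (B := ({mk z}ᶜ : Set ((G.bpUp v w C).contract R).V))
            (fun a ha => hAB a ha)
            (CostGraph.reach_mono' (le_refl _) (Set.subset_univ _) hup)
          exact hlift
      · -- deleted a node of C: use 2NC of bpUp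
        have hzC : z.1 ∈ C := by
          rcases z.2 with h | h
          · exact h
          · exact absurd h hz
        have hAB : ∀ a : (G.bpUp v w C).V, a ∈ ({z}ᶜ : Set (G.bpUp v w C).V) →
            mk a ∈ ({mk z}ᶜ : Set ((G.bpUp v w C).contract R).V) := by
          intro a ha h
          rcases hexact a z h with rfl | ⟨_, h2⟩
          · exact ha rfl
          · exact hz h2
        have hconn := hUp.2 z
        constructor
        · refine ⟨mk ⟨v, hvS⟩, hAB ⟨v, hvS⟩ ?_⟩
          intro h
          exact hdisj _ hzC (by rw [← Set.mem_singleton_iff.mp h]; exact Or.inl rfl)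
        · intro α hα β hβ
          obtain ⟨x, rfl⟩ := Quotient.exists_rep α
          obtain ⟨y, rfl⟩ := Quotient.exists_rep β
          have hx : x ∈ ({z}ᶜ : Set (G.bpUp v w C).V) := by
            intro h
            exact hα (by rw [Set.mem_singleton_iff.mp h]; exact rfl)
          have hy : y ∈ ({z}ᶜ : Set (G.bpUp v w C).V) := by
            intro h
            exact hβ (by rw [Set.mem_singleton_iff.mp h]; exact rfl)
          exact CostGraph.contract_reach' (R := R) (B := _) hAB (hconn.2 x hx y hy)
  · rw [if_neg hC2]
    exact hUp
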